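/- Let Ḡ be an orientation of a finite undirected simple graph G=(V,E) satisfying Invariant 1, let {u,v} ∈ E be oriented from u to v in Ḡ, let G̃ be the orientation of G − {u,v} obtained from Ḡ by removing the directed edge (u,v), and let P be an improving path in G̃ ending at u. Then the orientation Ḡ' obtained from G̃ by flipping P contains no improving path; that is, Ḡ' satisfies Invariant 1. -/

import Mathlib

open Finset

/-- An orientation of a simple graph `G`: a choice, for each edge `{u,v}` of `G`,
of exactly one of the directed edges `(u,v)`, `(v,u)`. -/
structure GraphOrientation {V : Type*} (G : SimpleGraph V) where
  dir : V → V → Bool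
  dir_adj : ∀ u v, dir u v = true → G.Adj u v
  exactly_one : ∀ u v, G.Adj u v → (dir u v = true ↔ ¬ dir v u = true)

/-- Out-degree of `v` w.r.t. a directed-edge relation `d`. -/
def outDegF {V : Type*} [Fintype V] (d : V → V → Bool) (v : V) : ℕ :=
  (Finset.univ.filter fun w => d v w = true).card

/-- Out-degree of a vertex in an orientation. -/
def GraphOrientation.outDeg {V : Type*} [Fintype V] {G : SimpleGraph V}
    (o : GraphOrientation G) (v : V) : ℕ := outDegF o.dir v

/-- Maximum out-degree `Δ` of an orientation. -/
def GraphOrientation.maxOutDeg {V : Type*} [Fintype V] {G : SimpleGraph V}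
    (o : GraphOrientation G) : ℕ := Finset.univ.sup o.outDeg

/-- `|E(S)|`: the number of edges of `G` with both endpoints in `S`. -/
def edgeCount {V : Type*} [Fintype V] [DecidableEq V] (G : SimpleGraph V)
    [DecidableRel G.Adj] (S : Finset V) : ℕ :=
  (G.edgeFinset.filter fun e => ∀ x ∈ e, x ∈ S).card

/-- A directed path in an orientation: a list of distinct vertices, of length at
least two (i.e. `k ≥ 1` edges), with consecutive vertices joined by directed edges. -/
def IsDirPath {V : Type*} {G : SimpleGraph V} (o : GraphOrientation G) (p : List V) : Prop :=
  p.Nodup ∧ 2 ≤ p.length ∧ List.Chain' (fun a b => o.dir a b = true) p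

/-- A directed path from `a` to `b`. -/
def IsPathFrom {V : Type*} {G : SimpleGraph V} (o : GraphOrientation G)
    (p : List V) (a b : V) : Prop :=
  IsDirPath o p ∧ p.head? = some a ∧ p.getLast? = some b

/-- Invariant 1: there is no improving path between any two vertices, i.e. no directed
path `⟨a,…,b⟩` with `odeg(a) > odeg(b) + 1`. -/
def Invariant1 {V : Type*} [Fintype V] {G : SimpleGraph V} (o : GraphOrientation G) : Prop :=
  ∀ p a b, IsPathFrom o p a b → o.outDeg a ≤ o.outDeg b + 1

/-- Invariant 2: there is no improving path starting at a vertex of maximum out-degree. -/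
def Invariant2 {V : Type*} [Fintype V] {G : SimpleGraph V} (o : GraphOrientation G) : Prop :=
  ∀ p a b, IsPathFrom o p a b → o.outDeg a = o.maxOutDeg → o.outDeg a ≤ o.outDeg b + 1

/-- Flipping the directed path `p`: every directed edge `(v_i, v_{i+1})` of `p`
is replaced by the reversed edge `(v_{i+1}, v_i)`; all other edges are unchanged. -/
def flipDir {V : Type*} [DecidableEq V] (d : V → V → Bool) (p : List V) : V → V → Bool :=
  fun a b => if (a, b) ∈ p.zip p.tail ∨ (b, a) ∈ p.zip p.tail then d b a else d a b

/-- `G + {u,v}`: the graph obtained from `G` by inserting the edge `{u,v}`. -/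
def addE {V : Type*} (G : SimpleGraph V) (u v : V) : SimpleGraph V :=
  G ⊔ SimpleGraph.fromEdgeSet {s(u, v)}

/-- `G − {u,v}`: the graph obtained from `G` by deleting the edge `{u,v}`. -/
def delE {V : Type*} (G : SimpleGraph V) (u v : V) : SimpleGraph V :=
  G.deleteEdges {s(u, v)}

namespace DF
variable {α : Type*}

variable {α : Type*}

lemma mem_of_head?' {l : List α} {c : α} (h : l.head? = some c) : c ∈ l := by
  cases l with
  | nil => simp at h
  | cons a t => simp only [List.head?_cons, Option.some.injEq] at h; simp [h.symm]

lemma some_or' {β : Type*} (a : β) (o : Option β) : (some a).or o = some a := rfl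

lemma mem_of_getLast?' {l : List α} {c : α} (h : l.getLast? = some c) : c ∈ l := by
  obtain ⟨ys, rfl⟩ := List.getLast?_eq_some_iff.1 h; simp

lemma pair_mem {l : List α} {c d : α} (h : (c,d) ∈ l.zip l.tail) : c ∈ l ∧ d ∈ l := by
  induction l with
  | nil => simp at h
  | cons a t ih =>
    cases t with
    | nil => simp at h
    | cons b t' =>
      simp only [List.tail_cons, List.zip_cons_cons, List.mem_cons] at h
      rcases h with h | h
      · obtain ⟨rfl, rfl⟩ := Prod.mk.injEq .. ▸ h; · constructor <;> simp
      · have := ih h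
        constructor <;> simp [this.1, this.2]

lemma pair_mem_tail {l : List α} {c d : α} (h : (c,d) ∈ l.zip l.tail) : d ∈ l.tail := by
  induction l with
  | nil => simp at h
  | cons a t ih =>
    cases t with
    | nil => simp at h
    | cons b t' =>
      simp only [List.tail_cons, List.zip_cons_cons, List.mem_cons] at h
      rcases h with h | h
      · simp [Prod.ext_iff] at h; simp [h.2]
      · have := ih h
        simp only [List.tail_cons] at this ⊢
        simp [this]

lemma pair_of_decomp {l1 l2 : List α} {c d : α} (h : l = l1 ++ c :: d :: l2) :
    (c,d) ∈ l.zip l.tail := by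
  subst h
  induction l1 with
  | nil => simp
  | cons a t ih =>
    cases h' : t ++ c :: d :: l2 with
    | nil => simp at h'
    | cons b t' =>
      rw [List.cons_append, h', List.tail_cons, List.zip_cons_cons]
      rw [h'] at ih
      simp only [List.tail_cons] at ih
      simp [ih]

lemma succ_unique {l : List α} (hl : l.Nodup) {c d e : α}
    (h1 : (c,d) ∈ l.zip l.tail) (h2 : (c,e) ∈ l.zip l.tail) : d = e := by
  induction l with
  | nil => simp at h1
  | cons a t ih =>
    cases t with
    | nil => simp at h1
    | cons b t' =>
      simp only [List.tail_cons, List.zip_cons_cons, List.mem_cons] at h1 h2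
      rcases h1 with h1 | h1 <;> rcases h2 with h2 | h2
      · simp [Prod.ext_iff] at h1 h2; rw [h1.2, h2.2]
      · exfalso; simp [Prod.ext_iff] at h1; obtain ⟨rfl, rfl⟩ := h1
        exact (List.nodup_cons.1 hl).1 (pair_mem h2).1
      · exfalso; simp [Prod.ext_iff] at h2; obtain ⟨rfl, rfl⟩ := h2
        exact (List.nodup_cons.1 hl).1 (pair_mem h1).1
      · exact ih (List.nodup_cons.1 hl).2 h1 h2

lemma pred_unique {l : List α} (hl : l.Nodup) {c d e : α}
    (h1 : (d,c) ∈ l.zip l.tail) (h2 : (e,c) ∈ l.zip l.tail) : d = e := by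
  induction l with
  | nil => simp at h1
  | cons a t ih =>
    cases t with
    | nil => simp at h1
    | cons b t' =>
      simp only [List.tail_cons, List.zip_cons_cons, List.mem_cons] at h1 h2
      rcases h1 with h1 | h1 <;> rcases h2 with h2 | h2
      · simp [Prod.ext_iff] at h1 h2; rw [h1.1, h2.1]
      · exfalso; simp [Prod.ext_iff] at h1; obtain ⟨rfl, rfl⟩ := h1
        have := pair_mem_tail h2
        simp only [List.tail_cons] at this
        exact (List.nodup_cons.1 (List.nodup_cons.1 hl).2).1 this
      · exfalso; simp [Prod.ext_iff] at h2; obtain ⟨rfl, rfl⟩ := h2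
        have := pair_mem_tail h1
        simp only [List.tail_cons] at this
        exact (List.nodup_cons.1 (List.nodup_cons.1 hl).2).1 this
      · exact ih (List.nodup_cons.1 hl).2 h1 h2

lemma last_no_succ {l : List α} (hl : l.Nodup) {c d : α}
    (hlast : l.getLast? = some c) (h : (c,d) ∈ l.zip l.tail) : False := by
  induction l with
  | nil => simp at h
  | cons a t ih =>
    cases t with
    | nil => simp at h
    | cons b t' =>
      simp only [List.tail_cons, List.zip_cons_cons, List.mem_cons] at h
      have hlast' : (b :: t').getLast? = some c := by
        rw [List.getLast?_cons_cons] at hlast; exact hlast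
      rcases h with h | h
      · simp [Prod.ext_iff] at h; obtain ⟨rfl, rfl⟩ := h
        exact (List.nodup_cons.1 hl).1 (mem_of_getLast?' hlast')
      · exact ih (List.nodup_cons.1 hl).2 hlast' h

lemma head_no_pred {l : List α} (hl : l.Nodup) {c d : α}
    (hhead : l.head? = some c) (h : (d,c) ∈ l.zip l.tail) : False := by
  cases l with
  | nil => simp at h
  | cons a t =>
    simp only [List.head?_cons, Option.some.injEq] at hhead
    subst hhead
    have := pair_mem_tail h
    simp only [List.tail_cons] at this
    exact (List.nodup_cons.1 hl).1 this

lemma exists_succ {l : List α} {c : α} (hc : c ∈ l) :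
    l.getLast? = some c ∨ ∃ d, (c,d) ∈ l.zip l.tail := by
  induction l with
  | nil => simp at hc
  | cons a t ih =>
    cases t with
    | nil => simp at hc; simp [hc]
    | cons b t' =>
      rcases List.mem_cons.1 hc with rfl | hc
      · right; exact ⟨b, by simp⟩
      · rcases ih hc with h | ⟨d, hd⟩
        · left; rw [List.getLast?_cons_cons]; exact h
        · right; exact ⟨d, by simp only [List.tail_cons, List.zip_cons_cons, List.mem_cons]; right; exact hd⟩

lemma exists_pred {l : List α} {c : α} (hc : c ∈ l) :
    l.head? = some c ∨ ∃ d, (d,c) ∈ l.zip l.tail := by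
  induction l with
  | nil => simp at hc
  | cons a t ih =>
    rcases List.mem_cons.1 hc with rfl | hc
    · left; simp
    · right
      rcases ih hc with h | ⟨d, hd⟩
      · cases t with
        | nil => simp at hc
        | cons b t' =>
          simp only [List.head?_cons, Option.some.injEq] at h; subst h
          exact ⟨a, by simp⟩
      · cases t with
        | nil => simp at hc
        | cons b t' =>
          exact ⟨d, by simp only [List.tail_cons, List.zip_cons_cons, List.mem_cons]; right; exact hd⟩

lemma pair_ne {l : List α} (hl : l.Nodup) {c d : α} (h : (c,d) ∈ l.zip l.tail) : c ≠ d := by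
  induction l with
  | nil => simp at h
  | cons a t ih =>
    cases t with
    | nil => simp at h
    | cons b t' =>
      simp only [List.tail_cons, List.zip_cons_cons, List.mem_cons] at h
      rcases h with h | h
      · simp [Prod.ext_iff] at h; obtain ⟨rfl, rfl⟩ := h
        intro rfl'
        exact (List.nodup_cons.1 hl).1 (by simp [rfl'])
      · exact ih (List.nodup_cons.1 hl).2 h

lemma no_two_cycle {l : List α} (hl : l.Nodup) {c d : α}
    (h1 : (c,d) ∈ l.zip l.tail) (h2 : (d,c) ∈ l.zip l.tail) : False := by
  induction l with
  | nil => simp at h1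
  | cons a t ih =>
    cases t with
    | nil => simp at h1
    | cons b t' =>
      simp only [List.tail_cons, List.zip_cons_cons, List.mem_cons] at h1 h2
      rcases h1 with h1 | h1 <;> rcases h2 with h2 | h2
      · simp [Prod.ext_iff] at h1 h2
        obtain ⟨rfl, rfl⟩ := h1
        exact (pair_ne hl (by simp)) (h2.1.symm)
      · simp [Prod.ext_iff] at h1; obtain ⟨rfl, rfl⟩ := h1
        exact (List.nodup_cons.1 hl).1 (pair_mem h2).2
      · simp [Prod.ext_iff] at h2; obtain ⟨rfl, rfl⟩ := h2
        exact (List.nodup_cons.1 hl).1 (pair_mem h1).2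
      · exact ih (List.nodup_cons.1 hl).2 h1 h2

lemma chain'_pair {r : α → α → Prop} {l : List α} (h : List.Chain' r l) {c d : α}
    (hm : (c,d) ∈ l.zip l.tail) : r c d := by
  induction l with
  | nil => simp at hm
  | cons a t ih =>
    cases t with
    | nil => simp at hm
    | cons b t' =>
      simp only [List.tail_cons, List.zip_cons_cons, List.mem_cons] at hm
      rcases hm with hm | hm
      · simp [Prod.ext_iff] at hm; obtain ⟨rfl, rfl⟩ := hm
        exact (List.isChain_cons_cons.1 h).1
      · exact ih (List.isChain_cons_cons.1 h).2 hm

lemma chain'_of_pairs {r : α → α → Prop} {l : List α}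
    (h : ∀ c d, (c,d) ∈ l.zip l.tail → r c d) : List.Chain' r l := by
  induction l with
  | nil => exact List.isChain_nil
  | cons a t ih =>
    cases t with
    | nil => exact List.isChain_singleton _
    | cons b t' =>
      apply List.isChain_cons_cons.2
      constructor
      · exact h a b (by simp)
      · exact ih (fun c d hm => h c d (by simp only [List.tail_cons, List.zip_cons_cons, List.mem_cons]; right; exact hm))




lemma first_hit {l : List α} {p : α → Prop} [DecidablePred p] (h : ∃ x ∈ l, p x) :
    ∃ l1 x l2, l = l1 ++ x :: l2 ∧ p x ∧ ∀ y ∈ l1, ¬ p y := by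
  induction l with
  | nil => simp at h
  | cons a t ih =>
    by_cases ha : p a
    · exact ⟨[], a, t, by simp, ha, by simp⟩
    · obtain ⟨x, hx, hpx⟩ := h
      rcases List.mem_cons.1 hx with rfl | hx
      · exact absurd hpx ha
      · obtain ⟨l1, x', l2, hdec, hpx', hl1⟩ := ih ⟨x, hx, hpx⟩
        exact ⟨a :: l1, x', l2, by simp [hdec], hpx',
          fun y hy => (List.mem_cons.1 hy).elim (fun h' => h' ▸ ha) (hl1 y)⟩

lemma last_hit {l : List α} {p : α → Prop} [DecidablePred p] (h : ∃ x ∈ l, p x) :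
    ∃ l1 x l2, l = l1 ++ x :: l2 ∧ p x ∧ ∀ y ∈ l2, ¬ p y := by
  induction l with
  | nil => simp at h
  | cons a t ih =>
    by_cases ht : ∃ x ∈ t, p x
    · obtain ⟨l1, x', l2, hdec, hpx', hl2⟩ := ih ht
      exact ⟨a :: l1, x', l2, by simp [hdec], hpx', hl2⟩
    · obtain ⟨x, hx, hpx⟩ := h
      rcases List.mem_cons.1 hx with rfl | hx
      · exact ⟨[], x, t, by simp, hpx, fun y hy hpy => ht ⟨y, hy, hpy⟩⟩
      · exact absurd ⟨x, hx, hpx⟩ ht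

lemma pair_fst_dropLast {l : List α} {c d : α} (h : (c,d) ∈ l.zip l.tail) :
    c ∈ l.dropLast := by
  induction l with
  | nil => simp at h
  | cons a t ih =>
    cases t with
    | nil => simp at h
    | cons b t' =>
      simp only [List.tail_cons, List.zip_cons_cons, List.mem_cons] at h
      rcases h with h | h
      · simp [Prod.ext_iff] at h
        simp [List.dropLast_cons₂, h.1]
      · have := ih h
        simp [List.dropLast_cons₂, this]

lemma ne_first_last {l : List α} (hnd : l.Nodup) (hlen : 2 ≤ l.length)
    {a b : α} (ha : l.head? = some a) (hb : l.getLast? = some b) : a ≠ b := by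
  cases l with
  | nil => simp at ha
  | cons c t =>
    simp only [List.head?_cons, Option.some.injEq] at ha
    subst ha
    cases t with
    | nil => simp at hlen
    | cons b' t' =>
      rw [List.getLast?_cons_cons] at hb
      have hbm : b ∈ b' :: t' := mem_of_getLast?' hb
      intro h
      exact (List.nodup_cons.1 hnd).1 (h ▸ hbm)


variable {V : Type*} [DecidableEq V]

lemma flip_noop (d : V → V → Bool) (P : List V) {a b : V}
    (h : a ∉ P ∨ b ∉ P) : flipDir d P a b = d a b := by
  unfold flipDir
  rw [if_neg]
  rintro (hm | hm)
  · exact h.elim (fun h' => h' (pair_mem hm).1) (fun h' => h' (pair_mem hm).2)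
  · exact h.elim (fun h' => h' (pair_mem hm).2) (fun h' => h' (pair_mem hm).1)

variable [Fintype V]

lemma outDegF_flip_of_not_mem (d : V → V → Bool) {P : List V} {x : V} (hx : x ∉ P) :
    outDegF (flipDir d P) x = outDegF d x := by
  unfold outDegF
  congr 1
  apply Finset.ext
  intro y
  simp only [Finset.mem_filter, Finset.mem_univ, true_and]
  rw [flip_noop d P (Or.inl hx)]

lemma outDegF_flip_head {d : V → V → Bool} {P : List V} {w n : V}
    (hnd : P.Nodup) (hch : List.Chain' (fun a b => d a b = true) P)
    (hanti : ∀ a b, d a b = true → ¬ d b a = true)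
    (hw : P.head? = some w) (hn : (w, n) ∈ P.zip P.tail) :
    outDegF (flipDir d P) w + 1 = outDegF d w := by
  have hdwn : d w n = true := chain'_pair hch hn
  have hset : Finset.univ.filter (fun y => flipDir d P w y = true)
      = (Finset.univ.filter (fun y => d w y = true)).erase n := by
    ext y
    simp only [Finset.mem_filter, Finset.mem_erase, Finset.mem_univ, true_and]
    by_cases hy : y = n
    · subst hy
      unfold flipDir
      rw [if_pos (Or.inl hn)]
      simp [hanti _ _ hdwn]
    · unfold flipDir
      rw [if_neg]
      · exact ⟨fun h => ⟨hy, h⟩, fun h => h.2⟩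
      · rintro (hm | hm)
        · exact hy (succ_unique hnd hm hn)
        · exact head_no_pred hnd hw hm
  rw [outDegF, outDegF, hset, Finset.card_erase_add_one]
  exact Finset.mem_filter.2 ⟨Finset.mem_univ n, hdwn⟩

lemma outDegF_flip_last {d : V → V → Bool} {P : List V} {u p : V}
    (hnd : P.Nodup) (hch : List.Chain' (fun a b => d a b = true) P)
    (hanti : ∀ a b, d a b = true → ¬ d b a = true)
    (hu : P.getLast? = some u) (hp : (p, u) ∈ P.zip P.tail) :
    outDegF (flipDir d P) u = outDegF d u + 1 := by
  have hdpu : d p u = true := chain'_pair hch hp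
  have hnot : d u p ≠ true := hanti _ _ hdpu
  have hset : Finset.univ.filter (fun y => flipDir d P u y = true)
      = insert p (Finset.univ.filter (fun y => d u y = true)) := by
    ext y
    simp only [Finset.mem_filter, Finset.mem_insert, Finset.mem_univ, true_and]
    by_cases hy : y = p
    · subst hy
      unfold flipDir
      rw [if_pos (Or.inr hp)]
      simp [hdpu]
    · unfold flipDir
      rw [if_neg]
      · exact ⟨fun h => Or.inr h, fun h => h.resolve_left hy⟩
      · rintro (hm | hm)
        · exact last_no_succ hnd hu hm
        · exact hy (pred_unique hnd hm hp)
  rw [outDegF, outDegF, hset, Finset.card_insert_of_notMem]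
  simp only [Finset.mem_filter, Finset.mem_univ, true_and]
  exact hnot

lemma outDegF_flip_mid {d : V → V → Bool} {P : List V} {x n p : V}
    (hnd : P.Nodup) (hch : List.Chain' (fun a b => d a b = true) P)
    (hanti : ∀ a b, d a b = true → ¬ d b a = true)
    (hn : (x, n) ∈ P.zip P.tail) (hp : (p, x) ∈ P.zip P.tail) :
    outDegF (flipDir d P) x = outDegF d x := by
  have hdxn : d x n = true := chain'_pair hch hn
  have hdpx : d p x = true := chain'_pair hch hp
  have hpn : p ≠ n := fun h => no_two_cycle hnd hn (h ▸ hp)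
  have hset : Finset.univ.filter (fun y => flipDir d P x y = true)
      = insert p ((Finset.univ.filter (fun y => d x y = true)).erase n) := by
    ext y
    simp only [Finset.mem_filter, Finset.mem_insert, Finset.mem_erase,
      Finset.mem_univ, true_and]
    by_cases hy : y = p
    · subst hy
      unfold flipDir
      rw [if_pos (Or.inr hp)]
      simp [hdpx]
    · by_cases hy2 : y = n
      · subst hy2
        unfold flipDir
        rw [if_pos (Or.inl hn)]
        simp [hanti _ _ hdxn, hy]
      · unfold flipDir
        rw [if_neg]
        · exact ⟨fun h => Or.inr ⟨hy2, h⟩, fun h => (h.resolve_left hy).2⟩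
        · rintro (hm | hm)
          · exact hy2 (succ_unique hnd hm hn)
          · exact hy (pred_unique hnd hm hp)
  rw [outDegF, outDegF, hset, Finset.card_insert_of_notMem, Finset.card_erase_add_one]
  · exact Finset.mem_filter.2 ⟨Finset.mem_univ n, hdxn⟩
  · simp only [Finset.mem_erase, Finset.mem_filter, Finset.mem_univ, true_and, not_and]
    intro _
    exact hanti _ _ hdpx


end DF

/-- After deleting the edge `{u,v}` (oriented from `u` to `v`) from an
Invariant-1 orientation and flipping an improving path `P` ending at `u`, the
resulting orientation `Ḡ'` contains no improving path, i.e. satisfies Invariant 1. -/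
theorem delete_flip_invariant1 {V : Type*} [Fintype V] [DecidableEq V]
    {G : SimpleGraph V} (o : GraphOrientation G) (hinv : Invariant1 o)
    (u v : V) (hdir : o.dir u v = true)
    (ot : GraphOrientation (delE G u v))
    (hot : ∀ a b, ot.dir a b = true ↔ (o.dir a b = true ∧ ¬ (a = u ∧ b = v)))
    (P : List V) (w : V) (hP : IsPathFrom ot P w u)
    (himp : ot.outDeg u + 1 < ot.outDeg w)
    (o' : GraphOrientation (delE G u v)) (ho' : o'.dir = flipDir ot.dir P) :
    Invariant1 o' := by
  obtain ⟨⟨hPnd, hPlen, hPch⟩, hPh, hPl⟩ := hP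
  have hanti : ∀ a b, ot.dir a b = true → ¬ ot.dir b a = true :=
    fun a b h => (ot.exactly_one a b (ot.dir_adj a b h)).1 h
  have hto : ∀ a b, ot.dir a b = true → o.dir a b = true := fun a b h => ((hot a b).1 h).1
  have hwP : w ∈ P := DF.mem_of_head?' hPh
  have huP : u ∈ P := DF.mem_of_getLast?' hPl
  have hwu : w ≠ u := DF.ne_first_last hPnd hPlen hPh hPl
  have hPcho : List.Chain' (fun a b => o.dir a b = true) P :=
    List.IsChain.imp (fun a b h => hto a b h) hPch
  have hdeg_ne : ∀ x, x ≠ u → ot.outDeg x = o.outDeg x := by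
    intro x hx
    unfold GraphOrientation.outDeg outDegF
    congr 1
    apply Finset.ext
    intro y
    simp only [Finset.mem_filter, Finset.mem_univ, true_and]
    rw [hot]
    simp only [and_iff_left_iff_imp]
    intro _ h
    exact hx h.1
  have hdeg_u : ot.outDeg u + 1 = o.outDeg u := by
    have hset : Finset.univ.filter (fun y => ot.dir u y = true)
        = (Finset.univ.filter (fun y => o.dir u y = true)).erase v := by
      apply Finset.ext
      intro y
      simp only [Finset.mem_filter, Finset.mem_erase, Finset.mem_univ, true_and]
      rw [hot]
      constructor
      · rintro ⟨h1, h2⟩; exact ⟨fun h => h2 ⟨rfl, h⟩, h1⟩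
      · rintro ⟨h1, h2⟩; exact ⟨h2, fun h => h1 h.2⟩
    unfold GraphOrientation.outDeg outDegF
    rw [hset, Finset.card_erase_add_one]
    exact Finset.mem_filter.2 ⟨Finset.mem_univ v, hdir⟩
  have hPw : IsPathFrom o P w u := ⟨⟨hPnd, hPlen, hPcho⟩, hPh, hPl⟩
  have hle : o.outDeg w ≤ o.outDeg u + 1 := hinv P w u hPw
  have how : o.outDeg w = o.outDeg u + 1 := by
    have h1 : ot.outDeg w = o.outDeg w := hdeg_ne w hwu
    omega
  have key1 : ∀ x, x ≠ w → o'.outDeg x = o.outDeg x := by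
    intro x hxw
    by_cases hxP : x ∈ P
    · by_cases hxu : x = u
      · subst hxu
        obtain ⟨p, hp⟩ : ∃ p, (p, x) ∈ P.zip P.tail := by
          rcases DF.exists_pred hxP with h | h
          · rw [hPh] at h
            exact absurd (Option.some.injEq w x ▸ h).symm hxw
          · exact h
        unfold GraphOrientation.outDeg
        rw [ho', DF.outDegF_flip_last hPnd hPch hanti hPl hp]
        unfold GraphOrientation.outDeg at hdeg_u
        exact hdeg_u
      · obtain ⟨n, hn⟩ : ∃ n, (x, n) ∈ P.zip P.tail := by
          rcases DF.exists_succ hxP with h | h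
          · rw [hPl] at h
            exact absurd (Option.some.injEq u x ▸ h).symm hxu
          · exact h
        obtain ⟨p, hp⟩ : ∃ p, (p, x) ∈ P.zip P.tail := by
          rcases DF.exists_pred hxP with h | h
          · rw [hPh] at h
            exact absurd (Option.some.injEq w x ▸ h).symm hxw
          · exact h
        unfold GraphOrientation.outDeg
        rw [ho', DF.outDegF_flip_mid hPnd hPch hanti hn hp]
        have := hdeg_ne x hxu
        unfold GraphOrientation.outDeg at this
        exact this
    · have hxu : x ≠ u := fun h => hxP (h ▸ huP)
      unfold GraphOrientation.outDeg
      rw [ho', DF.outDegF_flip_of_not_mem ot.dir hxP]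
      have := hdeg_ne x hxu
      unfold GraphOrientation.outDeg at this
      exact this
  have key2 : o'.outDeg w = o.outDeg u := by
    obtain ⟨n, hn⟩ : ∃ n, (w, n) ∈ P.zip P.tail := by
      rcases DF.exists_succ hwP with h | h
      · rw [hPl] at h
        exact absurd (Option.some.injEq u w ▸ h) hwu.symm
      · exact h
    have h := DF.outDegF_flip_head hPnd hPch hanti hPh hn
    have h2 := hdeg_ne w hwu
    unfold GraphOrientation.outDeg at h2 how ⊢
    rw [ho']
    omega
  intro Q a b hQ
  obtain ⟨⟨hQnd, hQlen, hQch⟩, hQh, hQl⟩ := hQ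
  have haQ : a ∈ Q := DF.mem_of_head?' hQh
  have hbQ : b ∈ Q := DF.mem_of_getLast?' hQl
  by_cases hQP : ∃ x ∈ Q, x ∈ P
  · -- Q meets P
    have upper : o'.outDeg a ≤ o.outDeg u + 1 := by
      have haux : a = u ∨ o.outDeg a ≤ o.outDeg u + 1 := by
        obtain ⟨Q1, x, Q2, hqdec, hxP, hQ1⟩ := DF.first_hit hQP
        obtain ⟨P1, P3, hpdec⟩ := List.append_of_mem hxP
        by_cases hcase : Q1 = [] ∧ P3 = []
        · left
          obtain ⟨h1, h2⟩ := hcase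
          subst h1 h2
          rw [hqdec] at hQh
          simp only [List.nil_append, List.head?_cons, Option.some.injEq] at hQh
          rw [hpdec] at hPl
          rw [List.getLast?_append] at hPl
          simp only [List.getLast?_singleton, DF.some_or', Option.some.injEq] at hPl
          rw [← hQh, ← hPl]
        · right
          have hQpre : (Q1 ++ [x]) <+: Q := ⟨Q2, by rw [hqdec]; simp⟩
          have hch1 : List.Chain' (fun c d => o.dir c d = true) (Q1 ++ [x]) := by
            apply DF.chain'_of_pairs
            intro c d hm
            have hc : c ∈ Q1 := by
              have := DF.pair_fst_dropLast hm
              rwa [List.dropLast_concat] at this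
            have h2 := DF.chain'_pair (hQch.prefix hQpre) hm
            rw [ho', DF.flip_noop ot.dir P (Or.inl (hQ1 c hc))] at h2
            exact hto c d h2
          have hch2 : List.Chain' (fun c d => o.dir c d = true) (x :: P3) :=
            hPcho.suffix ⟨P1, hpdec.symm⟩
          have hchR : List.Chain' (fun c d => o.dir c d = true) (Q1 ++ x :: P3) := by
            rcases List.isChain_append.1 hch1 with ⟨hc1, _, hlink⟩
            refine List.isChain_append.2 ⟨hc1, hch2, fun c hc y hy => ?_⟩
            simp only [List.head?_cons, Option.mem_def, Option.some.injEq] at hy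
            subst hy
            exact hlink c hc x (by simp)
          have hnodR : (Q1 ++ x :: P3).Nodup := by
            rw [List.nodup_append']
            refine ⟨hQnd.sublist (List.IsPrefix.sublist ⟨x :: Q2, hqdec.symm⟩),
              hPnd.sublist (List.IsSuffix.sublist ⟨P1, hpdec.symm⟩), ?_⟩
            intro y hy hy2
            exact hQ1 y hy (by rw [hpdec]; exact List.mem_append_right _ hy2)
          have hlenR : 2 ≤ (Q1 ++ x :: P3).length := by
            rcases not_and_or.1 hcase with h | h
            · have h1 : 0 < Q1.length := List.length_pos_iff.2 h
              simp only [List.length_append, List.length_cons]; omega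
            · have h1 : 0 < P3.length := List.length_pos_iff.2 h
              simp only [List.length_append, List.length_cons]; omega
          have hheadR : (Q1 ++ x :: P3).head? = some a := by
            rw [List.head?_append]
            rw [hqdec, List.head?_append] at hQh
            simpa using hQh
          have hlastR : (Q1 ++ x :: P3).getLast? = some u := by
            rw [hpdec, List.getLast?_append] at hPl
            obtain ⟨z, hz⟩ := Option.isSome_iff_exists.1
              (List.getLast?_isSome.2 (List.cons_ne_nil x P3))
            rw [hz, DF.some_or'] at hPl
            rw [List.getLast?_append, hz, DF.some_or']
            exact hPl
          exact hinv _ a u ⟨⟨hnodR, hlenR, hchR⟩, hheadR, hlastR⟩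
      rcases haux with rfl | haux
      · rw [key1 a hwu.symm]
        omega
      · by_cases haw : a = w
        · subst haw
          rw [key2]
          omega
        · rw [key1 a haw]
          exact haux
    have lower : o.outDeg u ≤ o'.outDeg b := by
      have haux : b = w ∨ o.outDeg w ≤ o.outDeg b + 1 := by
        obtain ⟨Q1, x, Q2, hqdec, hxP, hQ2⟩ := DF.last_hit hQP
        obtain ⟨P1, P3, hpdec⟩ := List.append_of_mem hxP
        by_cases hcase : Q2 = [] ∧ P1 = []
        · left
          obtain ⟨h1, h2⟩ := hcase
          subst h1 h2
          rw [hqdec] at hQl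
          rw [List.getLast?_append] at hQl
          simp only [List.getLast?_singleton, DF.some_or', Option.some.injEq] at hQl
          rw [hpdec] at hPh
          simp only [List.nil_append, List.head?_cons, Option.some.injEq] at hPh
          rw [← hQl, ← hPh]
        · right
          have hch1 : List.Chain' (fun c d => o.dir c d = true) (P1 ++ [x]) :=
            hPcho.prefix ⟨P3, by rw [hpdec]; simp⟩
          have hch2 : List.Chain' (fun c d => o.dir c d = true) (x :: Q2) := by
            apply DF.chain'_of_pairs
            intro c d hm
            have hd : d ∈ Q2 := by
              have := DF.pair_mem_tail hm
              simpa using this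
            have h2 := DF.chain'_pair (hQch.suffix ⟨Q1, hqdec.symm⟩) hm
            rw [ho', DF.flip_noop ot.dir P (Or.inr (hQ2 d hd))] at h2
            exact hto c d h2
          have hchR : List.Chain' (fun c d => o.dir c d = true) (P1 ++ x :: Q2) := by
            rcases List.isChain_append.1 hch1 with ⟨hc1, _, hlink⟩
            refine List.isChain_append.2 ⟨hc1, hch2, fun c hc y hy => ?_⟩
            simp only [List.head?_cons, Option.mem_def, Option.some.injEq] at hy
            subst hy
            exact hlink c hc x (by simp)
          have hxnP1 : x ∉ P1 := by
            have := hpdec ▸ hPnd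
            rcases List.nodup_append'.1 this with ⟨_, _, hdisj⟩
            intro hx1
            exact hdisj hx1 (List.mem_cons_self)
          have hnodR : (P1 ++ x :: Q2).Nodup := by
            rw [List.nodup_append']
            refine ⟨hPnd.sublist (List.IsPrefix.sublist ⟨x :: P3, hpdec.symm⟩),
              hQnd.sublist (List.IsSuffix.sublist ⟨Q1, hqdec.symm⟩), ?_⟩
            intro y hy hy2
            rcases List.mem_cons.1 hy2 with rfl | hy2
            · exact hxnP1 hy
            · exact hQ2 y hy2 (by rw [hpdec]; exact List.mem_append_left _ hy)
          have hlenR : 2 ≤ (P1 ++ x :: Q2).length := by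
            rcases not_and_or.1 hcase with h | h
            · have h1 : 0 < Q2.length := List.length_pos_iff.2 h
              simp only [List.length_append, List.length_cons]; omega
            · have h1 : 0 < P1.length := List.length_pos_iff.2 h
              simp only [List.length_append, List.length_cons]; omega
          have hheadR : (P1 ++ x :: Q2).head? = some w := by
            rw [List.head?_append]
            rw [hpdec, List.head?_append] at hPh
            simpa using hPh
          have hlastR : (P1 ++ x :: Q2).getLast? = some b := by
            rw [hqdec, List.getLast?_append] at hQl
            obtain ⟨z, hz⟩ := Option.isSome_iff_exists.1
              (List.getLast?_isSome.2 (List.cons_ne_nil x Q2))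
            rw [hz, DF.some_or'] at hQl
            rw [List.getLast?_append, hz, DF.some_or']
            exact hQl
          exact hinv _ w b ⟨⟨hnodR, hlenR, hchR⟩, hheadR, hlastR⟩
      rcases haux with rfl | haux
      · rw [key2]
      · by_cases hbw : b = w
        · subst hbw
          rw [key2]
        · rw [key1 b hbw]
          omega
    omega
  · -- Q disjoint from P
    push_neg at hQP
    have hQcho : List.Chain' (fun c d => o.dir c d = true) Q := by
      apply DF.chain'_of_pairs
      intro c d hm
      have hc : c ∈ Q := (DF.pair_mem hm).1
      have h2 := DF.chain'_pair hQch hm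
      rw [ho', DF.flip_noop ot.dir P (Or.inl (hQP c hc))] at h2
      exact hto c d h2
    have h := hinv Q a b ⟨⟨hQnd, hQlen, hQcho⟩, hQh, hQl⟩
    rw [key1 a (fun h' => hQP a haQ (h' ▸ hwP)), key1 b (fun h' => hQP b hbQ (h' ▸ hwP))]
    exact h
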